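/- Define f(s) = −1/s − s·log s + ((1+s)³/s²)·log(1+s) for s > 0. Then f is monotonically increasing on (0, ∞). -/

import Mathlib

open Set

private lemma aux_hasDeriv_g (u : ℝ) (hu : 0 < u) :
    HasDerivAt (fun v : ℝ => (v ^ 2 - 1) / (2 * v) - Real.log v)
      ((u - 1) ^ 2 / (2 * u ^ 2)) u := by
  have h1 : HasDerivAt (fun v : ℝ => (v ^ 2 - 1) / (2 * v))
      ((2 * u ^ 1 * (2 * u) - (u ^ 2 - 1) * (2 * 1)) / (2 * u) ^ 2) u :=
    ((hasDerivAt_pow 2 u).sub_const 1).div ((hasDerivAt_id u).const_mul 2)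
      (by positivity)
  have h2 : HasDerivAt (fun v : ℝ => Real.log v) u⁻¹ u := Real.hasDerivAt_log hu.ne'
  have := h1.sub h2
  refine this.congr_deriv ?_
  field_simp
  ring

private lemma aux_log_le {t : ℝ} (ht : 1 ≤ t) : Real.log t ≤ (t ^ 2 - 1) / (2 * t) := by
  have hmono : MonotoneOn (fun v : ℝ => (v ^ 2 - 1) / (2 * v) - Real.log v) (Set.Ici 1) := by
    apply monotoneOn_of_deriv_nonneg (convex_Ici 1)
    · intro u hu
      exact (aux_hasDeriv_g u (lt_of_lt_of_le one_pos hu)).continuousAt.continuousWithinAt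
    · intro u hu
      rw [interior_Ici] at hu
      exact (aux_hasDeriv_g u (lt_trans one_pos hu)).differentiableAt.differentiableWithinAt
    · intro u hu
      rw [interior_Ici] at hu
      rw [(aux_hasDeriv_g u (lt_trans one_pos hu)).deriv]
      positivity
  have h := hmono (Set.self_mem_Ici) (by exact ht) ht
  simp [Real.log_one] at h
  linarith

/-- The one-loop ghost vacuum polarization function
`f(s) = −1/s − s·log s + ((1+s)³/s²)·log(1+s)` is strictly increasing on `(0, ∞)`. -/
theorem ghost_f_strictMono :
    StrictMonoOn
      (fun s : ℝ => -1 / s - s * Real.log s + ((1 + s) ^ 3 / s ^ 2) * Real.log (1 + s))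
      (Set.Ioi 0) := by
  have key : ∀ x ∈ Set.Ioi (0 : ℝ),
      HasDerivAt (fun s : ℝ => -1 / s - s * Real.log s + ((1 + s) ^ 3 / s ^ 2) * Real.log (1 + s))
        (3 / (2 * (1 + x)) + (Real.log (1 + x) - Real.log x - 1 / (1 + x))
          + ((3 * x + 2) / x ^ 3) * ((x * (2 + x)) / (2 * (1 + x)) - Real.log (1 + x))) x := by
    intro x hx
    have hx0 : (0 : ℝ) < x := hx
    have hx1 : (0 : ℝ) < 1 + x := by linarith
    have h1 : HasDerivAt (fun s : ℝ => -1 / s) (-(-(x ^ 2)⁻¹)) x := by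
      have := (hasDerivAt_inv hx0.ne').neg
      refine this.congr_of_eventuallyEq (Filter.Eventually.of_forall fun s => show -1 / s = -s⁻¹ from ?_)
      rw [neg_div, one_div]
    have h2 : HasDerivAt (fun s : ℝ => s * Real.log s) (1 * Real.log x + x * x⁻¹) x :=
      (hasDerivAt_id x).mul (Real.hasDerivAt_log hx0.ne')
    have h3 : HasDerivAt (fun s : ℝ => (1 + s) ^ 3) (3 * (1 + x) ^ 2 * 1) x :=
      ((hasDerivAt_id x).const_add 1).pow 3
    have h4 : HasDerivAt (fun s : ℝ => s ^ 2) (2 * x ^ 1) x := by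
      simpa using hasDerivAt_pow 2 x
    have hq : HasDerivAt (fun s : ℝ => (1 + s) ^ 3 / s ^ 2)
        ((3 * (1 + x) ^ 2 * 1 * x ^ 2 - (1 + x) ^ 3 * (2 * x ^ 1)) / (x ^ 2) ^ 2) x :=
      h3.div h4 (by positivity)
    have h5 : HasDerivAt (fun s : ℝ => Real.log (1 + s)) (1 / (1 + x)) x :=
      ((hasDerivAt_id x).const_add 1).log hx1.ne'
    have htot := (h1.sub h2).add (hq.mul h5)
    refine htot.congr_deriv ?_
    have hlog : Real.log x = Real.log x := rfl
    field_simp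
    ring
  apply strictMonoOn_of_deriv_pos (convex_Ioi 0)
  · intro x hx
    exact (key x hx).continuousAt.continuousWithinAt
  · intro x hx
    rw [interior_Ioi] at hx
    rw [(key x hx).deriv]
    have hx0 : (0 : ℝ) < x := hx
    have hx1 : (0 : ℝ) < 1 + x := by linarith
    have t1 : (0 : ℝ) < 3 / (2 * (1 + x)) := by positivity
    have t2 : 1 / (1 + x) < Real.log (1 + x) - Real.log x := by
      have hfrac : (0 : ℝ) < x / (1 + x) := by positivity
      have hne : x / (1 + x) ≠ 1 := by
        intro h
        rw [div_eq_one_iff_eq hx1.ne'] at h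
        linarith
      have := Real.log_lt_sub_one_of_pos hfrac hne
      rw [Real.log_div hx0.ne' hx1.ne'] at this
      have heq : x / (1 + x) - 1 = -(1 / (1 + x)) := by field_simp; ring
      rw [heq] at this
      linarith
    have t3 : (0 : ℝ) ≤ ((3 * x + 2) / x ^ 3) * ((x * (2 + x)) / (2 * (1 + x)) - Real.log (1 + x)) := by
      apply mul_nonneg (by positivity)
      have := aux_log_le (t := 1 + x) (by linarith)
      have heq : ((1 + x) ^ 2 - 1) / (2 * (1 + x)) = (x * (2 + x)) / (2 * (1 + x)) := by
        ring_nf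
      linarith [heq ▸ this]
    linarith
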